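/- With t_{n,k} as above and first-order label entropy H^ell_1, one has H^ell_1(t_{n,k}) = (1 + n^{falling k}) * log2(1 + n^{falling k}) + n * n^{falling k} * k * log2(k), which is O(n * n^{falling k} * k * log k) for k >= 2. -/

import Mathlib

/-- Last `k` entries of a list. -/
def lastN {α} (k : ℕ) (l : List α) : List α := l.drop (l.length - k)

/-- Generic empirical entropy in per-node form: for each node `e` of `D` we add
`log2 (#{e' | cond e' = cond e} / #{e' | cond e' = cond e ∧ val e' = val e})`.
Grouping nodes by the pair `(cond, val)` recovers the usual form
`∑_z ∑_w m_{z,w} log2 (m_z / m_{z,w})`. -/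
noncomputable def entropySum {α β γ : Type*} [DecidableEq β] [DecidableEq γ]
    (D : List α) (cond : α → β) (val : α → γ) : ℝ :=
  (D.map (fun e => Real.logb 2
    ((D.countP (fun e' => decide (cond e' = cond e)) : ℝ) /
     (D.countP (fun e' => decide (cond e' = cond e ∧ val e' = val e)) : ℝ)))).sum

/-- `k`-label-history given the list of ancestor labels (padded with `box`). -/
def kLabHist {σ} (box : σ) (k : ℕ) (h : List σ) : List σ :=
  lastN k (List.replicate k box ++ h)
-- Unranked ordered labeled trees and forests.
mutual
inductive UTree (σ : Type) where
  | node (a : σ) (children : UForest σ) : UTree σ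
inductive UForest (σ : Type) where
  | nil : UForest σ
  | cons (t : UTree σ) (f : UForest σ) : UForest σ
end

/-- Number of trees in a forest. -/
def UForest.len {σ} : UForest σ → ℕ
  | .nil => 0
  | .cons _ f => 1 + f.len

mutual
/-- List of (label-history, label, degree) triples, one per node. -/
def udata {σ} (hist : List σ) : UTree σ → List (List σ × σ × ℕ)
  | .node a f => (hist, a, f.len) :: fudata (hist ++ [a]) f
/-- Node data of a forest of subtrees rooted at label-history `hist`. -/
def fudata {σ} (hist : List σ) : UForest σ → List (List σ × σ × ℕ)
  | .nil => []
  | .cons t f => udata hist t ++ fudata hist f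
end

/-- Number of nodes of an unranked tree. -/
def sizeU {σ} (t : UTree σ) : ℕ := (udata [] t).length
/-- `k`-th order label entropy `H^ℓ_k` of an unranked tree. -/
noncomputable def HlU {σ} [DecidableEq σ] (box : σ) (k : ℕ) (t : UTree σ) : ℝ :=
  entropySum (udata [] t) (fun e => kLabHist box k e.1) (fun e => e.2.1)

/-- `k`-th order label-degree entropy `H^{ℓ,deg}_k` of an unranked tree. -/
noncomputable def HldU {σ} [DecidableEq σ] (box : σ) (k : ℕ) (t : UTree σ) : ℝ :=
  entropySum (udata [] t) (fun e => (kLabHist box k e.1, e.2.1)) (fun e => e.2.2)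

/-- `k`-th order degree-label entropy `H^{deg,ℓ}_k` of an unranked tree. -/
noncomputable def HdlU {σ} [DecidableEq σ] (box : σ) (k : ℕ) (t : UTree σ) : ℝ :=
  entropySum (udata [] t) (fun e => (kLabHist box k e.1, e.2.2)) (fun e => e.2.1)

/-- Degree entropy `H^deg` of an unranked tree: `∑_i n_i log2(|t|/n_i)`. -/
noncomputable def HdegU {σ} [DecidableEq σ] (t : UTree σ) : ℝ :=
  entropySum (udata [] t) (fun _ => ()) (fun e => e.2.2)

/-- Label alphabet for `t_{n,k}`: a root symbol `a`, symbols `b u` indexed by tuples `u`,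
and symbols `c i` indexed by numbers `i`. -/
inductive Lab where
  | a : Lab
  | b (u : List ℕ) : Lab
  | c (i : ℕ) : Lab
deriving DecidableEq

/-- A single leaf node with label `x`. -/
def leafU {σ} (x : σ) : UTree σ := .node x .nil

/-- Concatenation of forests. -/
def appendF {σ} : UForest σ → UForest σ → UForest σ
  | .nil, g => g
  | .cons t f, g => .cons t (appendF f g)

/-- The forest of leaves `c_{i_1} c_{i_2} ⋯ c_{i_k}` for `u = (i_1, …, i_k)`. -/
def cChildren : List ℕ → UForest Lab
  | [] => .nil
  | i :: is => .cons (leafU (.c i)) (cChildren is)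

/-- The forest `(c_{i_1} ⋯ c_{i_k})^n`. -/
def cycleF (u : List ℕ) : ℕ → UForest Lab
  | 0 => .nil
  | n + 1 => appendF (cChildren u) (cycleF u n)

/-- The tree `t_u = b_u((c_{i_1} ⋯ c_{i_k})^n)`. -/
def tU (n : ℕ) (u : List ℕ) : UTree Lab := .node (.b u) (cycleF u n)

/-- The forest `t_{u_1} t_{u_2} ⋯ t_{u_m}` for a list of tuples. -/
def bForest (n : ℕ) : List (List ℕ) → UForest Lab
  | [] => .nil
  | u :: rest => .cons (tU n u) (bForest n rest)

/-- The tree `t_{n,k} = a(t_{u_1} ⋯ t_{u_m})`, given an enumeration `us` of the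
injective `k`-tuples over `{0, …, n-1}`. -/
def tnk (n : ℕ) (us : List (List ℕ)) : UTree Lab := .node .a (bForest n us)

/-- `us` is an enumeration (without repetitions, in arbitrary order) of all injective
`k`-tuples over `{0, …, n-1}`. -/
def IsEnum (n k : ℕ) (us : List (List ℕ)) : Prop :=
  us.Nodup ∧ ∀ u : List ℕ, u ∈ us ↔ (u.length = k ∧ u.Nodup ∧ ∀ i ∈ u, i < n)

-- structural lemmas
lemma fudata_appendF {σ} (hist : List σ) : ∀ f g : UForest σ,
    fudata hist (appendF f g) = fudata hist f ++ fudata hist g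
  | .nil, g => by simp [appendF, fudata]
  | .cons t f, g => by simp [appendF, fudata, fudata_appendF hist f g]

lemma fudata_cChildren (hist : List Lab) (u : List ℕ) :
    fudata hist (cChildren u) = u.map (fun i => (hist, Lab.c i, 0)) := by
  induction u with
  | nil => simp [cChildren, fudata]
  | cons i is ih => simp [cChildren, fudata, udata, leafU, UForest.len, ih]

lemma fudata_cycleF (hist : List Lab) (u : List ℕ) (n : ℕ) :
    fudata hist (cycleF u n) =
      ((List.replicate n u).flatten).map (fun i => (hist, Lab.c i, 0)) := by
  induction n with
  | zero => simp [cycleF, fudata]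
  | succ n ih => simp [cycleF, fudata_appendF, fudata_cChildren, ih, List.replicate_succ]

lemma len_bForest (n : ℕ) (us : List (List ℕ)) : (bForest n us).len = us.length := by
  induction us with
  | nil => simp [bForest, UForest.len]
  | cons u rest ih => simp [bForest, UForest.len, ih]; ring

def block (n : ℕ) (u : List ℕ) : List (List Lab × Lab × ℕ) :=
  ([Lab.a], Lab.b u, (cycleF u n).len) ::
    ((List.replicate n u).flatten).map (fun i => ([Lab.a, Lab.b u], Lab.c i, 0))

lemma udata_tnk (n : ℕ) (us : List (List ℕ)) :
    udata [] (tnk n us) = ([], Lab.a, us.length) :: us.flatMap (block n) := by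
  rw [tnk, udata, len_bForest]
  congr 1
  induction us with
  | nil => simp [bForest, fudata]
  | cons u rest ih =>
    simp only [bForest, fudata, tU, udata, List.flatMap_cons, ih, block, fudata_cycleF]
    simp

-- the cond function
lemma kLabHist_nil : kLabHist Lab.a 1 [] = [Lab.a] := rfl
lemma kLabHist_a : kLabHist Lab.a 1 [Lab.a] = [Lab.a] := rfl
lemma kLabHist_ab (u : List ℕ) : kLabHist Lab.a 1 [Lab.a, Lab.b u] = [Lab.b u] := rfl

attribute [simp] kLabHist_nil kLabHist_a kLabHist_ab

-- generic sum helpers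
lemma sum_map_ite_nat {α} [DecidableEq α] (a : α) (c : ℕ) :
    ∀ (l : List α), l.Nodup → a ∈ l →
      (l.map (fun x => if x = a then c else 0)).sum = c
  | [], _, h => by simp at h
  | x :: xs, hnd, h => by
    simp only [List.map_cons, List.sum_cons]
    rcases List.mem_cons.mp h with h | h
    · subst h
      have hx : a ∉ xs := (List.nodup_cons.mp hnd).1
      have hz0 : (xs.map (fun y => if y = a then c else 0)).sum = 0 := by
        rw [List.sum_eq_zero]
        intro y hy
        simp only [List.mem_map] at hy
        obtain ⟨z, hz, rfl⟩ := hy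
        have : z ≠ a := fun e => hx (e ▸ hz)
        simp [this]
      simp [hz0]
    · have hx : x ≠ a := by
        rintro rfl; exact (List.nodup_cons.mp hnd).1 h
      rw [sum_map_ite_nat a c xs (List.nodup_cons.mp hnd).2 h]
      simp [hx]

lemma sum_map_const_real {α} (l : List α) (f : α → ℝ) (c : ℝ)
    (h : ∀ x ∈ l, f x = c) : (l.map f).sum = l.length * c := by
  rw [List.map_congr_left (g := fun _ => c) h]
  simp [List.map_const', mul_comm]

lemma countP_eq_count {α} [DecidableEq α] (l : List α) (i : α) :
    l.countP (fun j => decide (j = i)) = l.count i := by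
  induction l with
  | nil => simp
  | cons x xs ih => simp [List.countP_cons, List.count_cons, ih]

-- predicates
def PA : List Lab × Lab × ℕ → Bool := fun e' => decide (kLabHist Lab.a 1 e'.1 = [Lab.a])
def PB : List Lab × Lab × ℕ → Bool :=
  fun e' => decide (kLabHist Lab.a 1 e'.1 = [Lab.a] ∧ e'.2.1 = Lab.a)
def PC (u : List ℕ) : List Lab × Lab × ℕ → Bool :=
  fun e' => decide (kLabHist Lab.a 1 e'.1 = [Lab.a] ∧ e'.2.1 = Lab.b u)
def PD (u : List ℕ) : List Lab × Lab × ℕ → Bool :=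
  fun e' => decide (kLabHist Lab.a 1 e'.1 = [Lab.b u])
def PE (u : List ℕ) (i : ℕ) : List Lab × Lab × ℕ → Bool :=
  fun e' => decide (kLabHist Lab.a 1 e'.1 = [Lab.b u] ∧ e'.2.1 = Lab.c i)

-- block-level counts
lemma bA (n : ℕ) (u : List ℕ) : (block n u).countP PA = 1 := by
  simp [block, PA, List.countP_cons, List.countP_map, Function.comp_def]

lemma bB (n : ℕ) (u : List ℕ) : (block n u).countP PB = 0 := by
  simp [block, PB, List.countP_cons, List.countP_map, Function.comp_def]

lemma bC (n : ℕ) (u u' : List ℕ) :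
    (block n u').countP (PC u) = if u' = u then 1 else 0 := by
  by_cases h : u' = u <;>
    simp [block, PC, List.countP_cons, List.countP_map, Function.comp_def, h]

lemma bD (n : ℕ) (u u' : List ℕ) :
    (block n u').countP (PD u) = if u' = u then n * u'.length else 0 := by
  by_cases h : u' = u <;>
    simp [block, PD, List.countP_cons, List.countP_map, Function.comp_def, h,
      List.countP_flatten, List.map_replicate, List.sum_replicate, smul_eq_mul,
      List.length_flatten]

lemma bE (n : ℕ) (u u' : List ℕ) (i : ℕ) :
    (block n u').countP (PE u i) = if u' = u then n * u'.count i else 0 := by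
  by_cases h : u' = u <;>
    simp [block, PE, List.countP_cons, List.countP_map, Function.comp_def, h,
      List.countP_flatten, List.map_replicate, List.sum_replicate, smul_eq_mul,
      countP_eq_count]

def Dl (n : ℕ) (us : List (List ℕ)) : List (List Lab × Lab × ℕ) :=
  ([], Lab.a, us.length) :: us.flatMap (block n)

noncomputable def gfun (n : ℕ) (us : List (List ℕ)) (e : List Lab × Lab × ℕ) : ℝ :=
  Real.logb 2
    (((Dl n us).countP (fun e' => decide (kLabHist Lab.a 1 e'.1 = kLabHist Lab.a 1 e.1)) : ℝ) /
     ((Dl n us).countP (fun e' => decide (kLabHist Lab.a 1 e'.1 = kLabHist Lab.a 1 e.1 ∧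
        e'.2.1 = e.2.1)) : ℝ))

lemma HlU_eq (n : ℕ) (us : List (List ℕ)) :
    HlU Lab.a 1 (tnk n us) = ((Dl n us).map (gfun n us)).sum := by
  rw [HlU, udata_tnk]
  rfl

lemma cA (n : ℕ) (us : List (List ℕ)) : (Dl n us).countP PA = 1 + us.length := by
  simp [Dl, List.countP_cons, List.countP_flatMap, Function.comp_def, bA, PA,
    List.map_const', List.sum_replicate, smul_eq_mul]
  omega

lemma cB (n : ℕ) (us : List (List ℕ)) : (Dl n us).countP PB = 1 := by
  simp [Dl, List.countP_cons, List.countP_flatMap, Function.comp_def, bB, PB,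
    List.map_const', List.sum_replicate]

lemma cC (n : ℕ) (us : List (List ℕ)) (u : List ℕ) (hnd : us.Nodup) (hu : u ∈ us) :
    (Dl n us).countP (PC u) = 1 := by
  have : (us.map fun u' => (block n u').countP (PC u)).sum = 1 := by
    rw [List.map_congr_left (g := fun u' => if u' = u then 1 else 0)
      (fun u' _ => bC n u u')]
    exact sum_map_ite_nat u 1 us hnd hu
  simp only [Dl, List.countP_cons, List.countP_flatMap, Function.comp_def, this, PC]
  simp

lemma cD (n k : ℕ) (us : List (List ℕ)) (u : List ℕ) (hnd : us.Nodup) (hu : u ∈ us)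
    (hlen : u.length = k) : (Dl n us).countP (PD u) = n * k := by
  have : (us.map fun u' => (block n u').countP (PD u)).sum = n * k := by
    rw [List.map_congr_left (g := fun u' => if u' = u then n * k else 0)
      (fun u' _ => by
        rw [bD]
        by_cases h : u' = u <;> simp [h, hlen])]
    exact sum_map_ite_nat u (n * k) us hnd hu
  simp only [Dl, List.countP_cons, List.countP_flatMap, Function.comp_def, this, PD]
  simp

lemma cE (n : ℕ) (us : List (List ℕ)) (u : List ℕ) (i : ℕ) (hnd : us.Nodup) (hu : u ∈ us)
    (hund : u.Nodup) (hi : i ∈ u) : (Dl n us).countP (PE u i) = n := by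
  have : (us.map fun u' => (block n u').countP (PE u i)).sum = n := by
    rw [List.map_congr_left (g := fun u' => if u' = u then n else 0)
      (fun u' _ => by
        rw [bE]
        by_cases h : u' = u
        · subst h; rw [List.count_eq_one_of_mem hund hi, mul_one]
        · simp [h])]
    exact sum_map_ite_nat u n us hnd hu
  simp only [Dl, List.countP_cons, List.countP_flatMap, Function.comp_def, this, PE]
  simp

lemma sum_flatMap_real {α} (l : List α) (f : α → List ℝ) :
    (l.flatMap f).sum = (l.map fun a => (f a).sum).sum := by
  induction l with
  | nil => simp
  | cons x xs ih => simp [List.flatMap_cons, ih]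

lemma gfun_root (n : ℕ) (us : List (List ℕ)) (d : ℕ) :
    gfun n us ([], Lab.a, d) = Real.logb 2 (1 + us.length) := by
  simp only [gfun, kLabHist_nil]
  show Real.logb 2 (((Dl n us).countP PA : ℝ) / ((Dl n us).countP PB : ℝ)) = _
  rw [cA, cB]
  push_cast
  simp

lemma gfun_broot (n : ℕ) (us : List (List ℕ)) (u : List ℕ) (d : ℕ)
    (hnd : us.Nodup) (hu : u ∈ us) :
    gfun n us ([Lab.a], Lab.b u, d) = Real.logb 2 (1 + us.length) := by
  simp only [gfun, kLabHist_a]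
  show Real.logb 2 (((Dl n us).countP PA : ℝ) / ((Dl n us).countP (PC u) : ℝ)) = _
  rw [cA, cC n us u hnd hu]
  push_cast
  simp

lemma gfun_c (n k : ℕ) (us : List (List ℕ)) (u : List ℕ) (i : ℕ) (d : ℕ)
    (hnd : us.Nodup) (hu : u ∈ us) (hlen : u.length = k) (hund : u.Nodup) (hi : i ∈ u)
    (hn : 0 < n) :
    gfun n us ([Lab.a, Lab.b u], Lab.c i, d) = Real.logb 2 k := by
  simp only [gfun, kLabHist_ab]
  show Real.logb 2 (((Dl n us).countP (PD u) : ℝ) / ((Dl n us).countP (PE u i) : ℝ)) = _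
  rw [cD n k us u hnd hu hlen, cE n us u i hnd hu hund hi]
  push_cast
  rw [mul_comm, mul_div_assoc, div_self (by exact_mod_cast hn.ne' : (n:ℝ) ≠ 0), mul_one]

lemma blocksum (n k : ℕ) (us : List (List ℕ)) (u : List ℕ)
    (hnd : us.Nodup) (hu : u ∈ us) (hlen : u.length = k) (hund : u.Nodup)
    (hn : 0 < n) :
    ((block n u).map (gfun n us)).sum =
      Real.logb 2 (1 + us.length) + (n * k : ℝ) * Real.logb 2 k := by
  simp only [block, List.map_cons, List.sum_cons, List.map_map]
  rw [gfun_broot n us u _ hnd hu]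
  congr 1
  rw [sum_map_const_real _ _ (Real.logb 2 k) (by
    intro i himem
    simp only [List.mem_flatten, List.mem_replicate] at himem
    obtain ⟨l, ⟨-, hlu⟩, hi⟩ := himem
    exact gfun_c n k us u i 0 hnd hu hlen hund (hlu ▸ hi) hn)]
  rw [show ((List.replicate n u).flatten).length = n * k by
    simp [List.length_flatten, List.map_replicate, List.sum_replicate, hlen]]
  push_cast
  ring

lemma Hl_val (n k : ℕ) (us : List (List ℕ)) (h1 : 1 ≤ k) (hkn : k ≤ n)
    (he : IsEnum n k us) :
    HlU Lab.a 1 (tnk n us) =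
      (1 + (us.length : ℝ)) * Real.logb 2 (1 + us.length) +
        (n : ℝ) * us.length * k * Real.logb 2 k := by
  obtain ⟨hnd, hch⟩ := he
  have hn : 0 < n := lt_of_lt_of_le h1 hkn
  rw [HlU_eq]
  simp only [Dl, List.map_cons, List.sum_cons, List.map_flatMap]
  rw [gfun_root, sum_flatMap_real,
    sum_map_const_real _ _ (Real.logb 2 (1 + us.length) + (n * k : ℝ) * Real.logb 2 k) (by
      intro u hu
      have h := (hch u).mp hu
      exact blocksum n k us u hnd hu h.1 h.2.1 hn)]
  push_cast
  ring

lemma length_enum (n k : ℕ) (us : List (List ℕ)) (he : IsEnum n k us) :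
    us.length = n.descFactorial k := by
  obtain ⟨hnd, hch⟩ := he
  rw [← List.toFinset_card_of_nodup hnd]
  have : (Finset.univ : Finset (Fin k ↪ Fin n)).card = us.toFinset.card := by
    apply Finset.card_nbij (fun e => List.ofFn (fun j => (e j : ℕ)))
    · intro e _
      simp only [Finset.mem_coe, List.mem_toFinset]
      apply (hch _).mpr
      refine ⟨List.length_ofFn, List.nodup_ofFn.mpr ?_, ?_⟩
      · exact Fin.val_injective.comp e.injective
      · intro i hi
        rw [List.mem_ofFn] at hi
        obtain ⟨j, rfl⟩ := hi
        exact (e j).isLt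
    · intro e1 _ e2 _ h
      have h2 := List.ofFn_injective h
      ext j
      exact congrFun h2 j
    · intro l hl
      simp only [Finset.mem_coe, List.mem_toFinset] at hl
      obtain ⟨hlen, hund, hlt⟩ := (hch l).mp hl
      have hget : ∀ j : Fin k, l.get (Fin.cast hlen.symm j) < n :=
        fun j => hlt _ (List.mem_iff_get.mpr ⟨_, rfl⟩)
      refine ⟨⟨fun j => ⟨l.get (Fin.cast hlen.symm j), hget j⟩, ?_⟩, by simp, ?_⟩
      · intro j1 j2 hj
        have : l.get (Fin.cast hlen.symm j1) = l.get (Fin.cast hlen.symm j2) :=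
          congrArg Fin.val hj
        have h4 := List.nodup_iff_injective_get.mp hund this
        have h5 := congrArg Fin.val h4
        simp only [Fin.coe_cast] at h5
        exact Fin.ext h5
      · apply List.ext_getElem
        · simp [hlen]
        · intro i h1 h2
          simp [List.getElem_ofFn, List.get_eq_getElem]
  rw [← this, Finset.card_univ, Fintype.card_embedding_eq, Fintype.card_fin, Fintype.card_fin]


/-- For `n ≥ k ≥ 1` and any enumeration `us` of the injective `k`-tuples over `[n]`,
the first-order label entropy of `t_{n,k}` (with padding symbol `a`) equals
`(1 + n^{falling k}) log2 (1 + n^{falling k}) + n · n^{falling k} · k · log2 k`;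
moreover there is an absolute constant `C > 0` such that for all `k ≥ 2` this is at most
`C · n · n^{falling k} · k · log2 k`. -/
theorem tnk_Hl1 :
    (∀ n k : ℕ, ∀ us : List (List ℕ), 1 ≤ k → k ≤ n → IsEnum n k us →
      HlU Lab.a 1 (tnk n us) =
        (1 + (n.descFactorial k : ℝ)) * Real.logb 2 (1 + (n.descFactorial k : ℝ)) +
          (n : ℝ) * (n.descFactorial k : ℝ) * (k : ℝ) * Real.logb 2 k) ∧
    ∃ C : ℝ, 0 < C ∧ ∀ n k : ℕ, ∀ us : List (List ℕ),
      2 ≤ k → k ≤ n → IsEnum n k us →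
      HlU Lab.a 1 (tnk n us) ≤
        C * ((n : ℝ) * (n.descFactorial k : ℝ) * (k : ℝ) * Real.logb 2 k) := by
  have main : ∀ n k : ℕ, ∀ us : List (List ℕ), 1 ≤ k → k ≤ n → IsEnum n k us →
      HlU Lab.a 1 (tnk n us) =
        (1 + (n.descFactorial k : ℝ)) * Real.logb 2 (1 + (n.descFactorial k : ℝ)) +
          (n : ℝ) * (n.descFactorial k : ℝ) * (k : ℝ) * Real.logb 2 k := by
    intro n k us h1 hkn he
    rw [Hl_val n k us h1 hkn he, length_enum n k us he]
  refine ⟨main, 9, by norm_num, ?_⟩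
  intro n k us hk2 hkn he
  rw [main n k us (by omega) hkn he]
  set m : ℝ := (n.descFactorial k : ℝ) with hm
  have hdpos : 0 < n.descFactorial k := by
    rcases Nat.eq_zero_or_pos (n.descFactorial k) with h | h
    · have := Nat.descFactorial_eq_zero_iff_lt.mp h; omega
    · exact h
  have hnat : 1 + n.descFactorial k ≤ n ^ (2 * k) := by
    have h1 : n.descFactorial k ≤ n ^ k := Nat.descFactorial_le_pow n k
    have h2 : 1 ≤ n ^ k := Nat.one_le_pow _ _ (by omega)
    have h3 : 2 * n ^ k ≤ n ^ (k + 1) := by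
      rw [pow_succ]
      calc 2 * n ^ k = n ^ k * 2 := by ring
        _ ≤ n ^ k * n := Nat.mul_le_mul_left _ (by omega)
    have h4 : n ^ (k + 1) ≤ n ^ (2 * k) := Nat.pow_le_pow_right (by omega) (by omega)
    omega
  have hm1 : (1 : ℝ) ≤ m := by rw [hm]; exact_mod_cast hdpos
  have hkR : (2 : ℝ) ≤ (k : ℝ) := by exact_mod_cast hk2
  have hnR : (2 : ℝ) ≤ (n : ℝ) := by exact_mod_cast (le_trans hk2 hkn)
  have hlogk : 1 ≤ Real.logb 2 (k : ℝ) := by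
    have h22 : Real.logb 2 2 = 1 := by
      apply Real.logb_self_eq_one <;> norm_num
    rw [← h22]
    exact (Real.logb_le_logb (by norm_num) (by norm_num) (by linarith)).mpr hkR
  have hlog2pos : (0.5 : ℝ) ≤ Real.log 2 := by
    linarith [Real.log_two_gt_d9]
  have hlogn : Real.logb 2 (n : ℝ) ≤ 2 * n := by
    rw [Real.logb, div_le_iff₀ (by linarith : (0:ℝ) < Real.log 2)]
    nlinarith [Real.log_le_sub_one_of_pos (by linarith : (0:ℝ) < (n:ℝ))]
  have hlog1m : Real.logb 2 (1 + m) ≤ 4 * k * n := by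
    have hc : (1 + m : ℝ) ≤ (n : ℝ) ^ (2 * k) := by
      rw [hm]
      exact_mod_cast hnat
    calc Real.logb 2 (1 + m)
        ≤ Real.logb 2 ((n : ℝ) ^ (2 * k)) :=
          (Real.logb_le_logb (by norm_num) (by linarith) (by positivity)).mpr hc
      _ = ((2 * k : ℕ) : ℝ) * Real.logb 2 (n : ℝ) := Real.logb_pow 2 _ _
      _ ≤ 4 * k * n := by
          push_cast
          nlinarith [Real.logb_nonneg (by norm_num : (1:ℝ) < 2) (by linarith : (1:ℝ) ≤ (n:ℝ))]
  have hnonneg : 0 ≤ Real.logb 2 (1 + m) :=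
    Real.logb_nonneg (by norm_num) (by linarith)
  have e1 : (1 + m) * Real.logb 2 (1 + m) ≤ (2 * m) * (4 * k * n) :=
    mul_le_mul (by linarith) hlog1m hnonneg (by linarith)
  have e2 : 8 * (m * k * n) * 1 ≤ 8 * (m * k * n) * Real.logb 2 (k : ℝ) :=
    mul_le_mul_of_nonneg_left hlogk (by positivity)
  nlinarith [e1, e2]
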